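/- (Proposition 2, sandwich bound) For every time t ∈ {0,…,T−1}, every state (y, r, π_t) with y ≥ 0, and every ε > 0, the value function satisfies −γ·ε ≤ V_t(y + ε, r, π_t) − V_t(y, r, π_t) ≤ −π_off⁻·ε. In particular, V_t is strictly decreasing in the remaining EV charging demand y. -/

import Mathlib

open MeasureTheory Set

/-- NEM X payment for net consumption `z` with buy price `pp` and sell price `pm`. -/
noncomputable def NEMPayment (pp pm z : ℝ) : ℝ := pp * max z 0 - pm * max (-z) 0


lemma nem_alt (pp pm z : ℝ) : NEMPayment pp pm z = pm * z + (pp - pm) * max z 0 := by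
  unfold NEMPayment
  rcases le_total z 0 with h | h
  · rw [max_eq_right h, max_eq_left (by linarith : (0:ℝ) ≤ -z)]; ring
  · rw [max_eq_left h, max_eq_right (by linarith : -z ≤ 0)]; ring

lemma nem_bounds {pp pm a b : ℝ} (hpm : 0 ≤ pm) (hpp : pm ≤ pp) (hab : a ≤ b) :
    pm * (b - a) ≤ NEMPayment pp pm b - NEMPayment pp pm a ∧
      NEMPayment pp pm b - NEMPayment pp pm a ≤ pp * (b - a) := by
  rw [nem_alt, nem_alt]
  have h1 : max a 0 ≤ max b 0 := max_le_max hab le_rfl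
  have h2 : max b 0 - max a 0 ≤ b - a := by
    rcases le_total 0 a with h | h
    · rw [max_eq_left h, max_eq_left (by linarith)]
    · rw [max_eq_right h]
      have : max b 0 ≤ b - a := max_le (by linarith) (by linarith)
      linarith
  constructor
  · nlinarith
  · nlinarith

lemma nem_lip {pp pm a b : ℝ} (hpm : 0 ≤ pm) (hpp : pm ≤ pp) :
    |NEMPayment pp pm b - NEMPayment pp pm a| ≤ pp * |b - a| := by
  rcases le_total a b with h | h
  · obtain ⟨h1, h2⟩ := nem_bounds hpm hpp h
    rw [abs_of_nonneg (by linarith : (0:ℝ) ≤ b - a)]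
    rw [abs_le]
    constructor
    · nlinarith
    · exact h2
  · obtain ⟨h1, h2⟩ := nem_bounds hpm hpp h
    rw [abs_sub_comm b a, abs_of_nonneg (by linarith : (0:ℝ) ≤ a - b), abs_le]
    constructor
    · nlinarith
    · nlinarith

lemma sSup_trans_le {s t : Set ℝ} (hne : s.Nonempty) (hbdd : BddAbove t) (c : ℝ)
    (h : ∀ x ∈ s, ∃ z ∈ t, x + c ≤ z) : sSup s + c ≤ sSup t := by
  have h1 : sSup s ≤ sSup t - c :=
    csSup_le hne fun x hx => by
      obtain ⟨z, hz, hxz⟩ := h x hx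
      have := le_csSup hbdd hz
      linarith
  linarith


/-- The superdifferential of a function `f : ℝ → ℝ` (viewed as a concave function
on `[0, ∞)`) at a point `y`. -/
def superdiff (f : ℝ → ℝ) (y : ℝ) : Set ℝ :=
  {s | ∀ z, 0 ≤ z → f z ≤ f y + s * (z - y)}

/-- Data of the EV-charging / flexible-consumption dynamic program over horizon
`{0, …, T-1}` with `K` flexible loads, under NEM time-of-use prices. -/
structure EVModel (K T : ℕ) (Ω : Type) [MeasurableSpace Ω] where
  /-- underlying probability measure -/
  μ : Measure Ω
  prob : IsProbabilityMeasure μ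
  /-- consumption upper bounds -/
  dbar : Fin K → ℝ
  dbar_pos : ∀ i, 0 < dbar i
  /-- device utility functions -/
  U : Fin K → ℝ → ℝ
  U_strictConcave : ∀ i, StrictConcaveOn ℝ (Icc 0 (dbar i)) (U i)
  U_strictMono : ∀ i, StrictMonoOn (U i) (Icc 0 (dbar i))
  U_diff : ∀ i, ∀ x ∈ Icc 0 (dbar i), DifferentiableWithinAt ℝ (U i) (Icc 0 (dbar i)) x
  U_contDeriv : ∀ i, ContinuousOn (fun x => derivWithin (U i) (Icc 0 (dbar i)) x) (Icc 0 (dbar i))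
  U_zero : ∀ i, U i 0 = 0
  /-- renewable processes -/
  r : ℕ → Ω → ℝ
  r_meas : ∀ t, Measurable (r t)
  r_nonneg : ∀ t ω, 0 ≤ r t ω
  r_int : ∀ t, Integrable (r t) μ
  r_indep : ProbabilityTheory.iIndepFun r μ
  /-- time-of-use buy prices `π_t⁺` -/
  pip : ℕ → ℝ
  /-- time-of-use sell prices `π_t⁻` -/
  pim : ℕ → ℝ
  /-- maximal per-period EV charge -/
  vbar : ℝ
  vbar_pos : 0 < vbar
  /-- per-unit penalty for unmet EV demand at the horizon -/
  γ : ℝ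
  /-- `π_off⁻ = min_t π_t⁻` -/
  pioff : ℝ
  pioff_le : ∀ t < T, pioff ≤ pim t
  pioff_attained : ∃ t < T, pioff = pim t
  /-- assumption A1 -/
  A1 : ∀ t < T, 0 < pim t ∧ pim t ≤ pip t ∧ pip t < γ

namespace EVModel

variable {K T : ℕ} {Ω : Type} [MeasurableSpace Ω]

/-- Stage reward `g_t(x_t, v, d)`. -/
noncomputable def stage (M : EVModel K T Ω) (t : ℕ) (rt v : ℝ) (d : Fin K → ℝ) : ℝ :=
  ∑ i, M.U i (d i) - NEMPayment (M.pip t) (M.pim t) (v + ∑ i, d i - rt)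

/-- Feasible decisions `(v, d)` given remaining demand `y`. -/
def feas (M : EVModel K T Ω) (y : ℝ) : Set (ℝ × (Fin K → ℝ)) :=
  {p | p.1 ∈ Icc 0 (min M.vbar y) ∧ ∀ i, p.2 i ∈ Icc 0 (M.dbar i)}

/-- Value function indexed by `k = T - 1 - t`, the number of remaining periods after
the current one. -/
noncomputable def W (M : EVModel K T Ω) : ℕ → ℝ → ℝ → ℝ
  | 0 => fun y rt => sSup ((fun p : ℝ × (Fin K → ℝ) =>
      M.stage (T - 1) rt p.1 p.2 - M.γ * (y - p.1)) '' M.feas y)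
  | (k + 1) => fun y rt => sSup ((fun p : ℝ × (Fin K → ℝ) =>
      M.stage (T - 2 - k) rt p.1 p.2 +
        ∫ ω, M.W k (y - p.1) (M.r (T - 1 - k) ω) ∂M.μ) '' M.feas y)

/-- Value function `V_t(y, r_t)` (the price argument is determined by `t`). -/
noncomputable def V (M : EVModel K T Ω) (t : ℕ) (y rt : ℝ) : ℝ := M.W (T - 1 - t) y rt

/-- Expected value function `V̄_t(y) = E[V_t(y, r_t, π_t)]`. -/
noncomputable def Vbar (M : EVModel K T Ω) (t : ℕ) (y : ℝ) : ℝ := ∫ ω, M.V t y (M.r t ω) ∂M.μ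

/-- Objective of the Bellman equation at time `t` in state `(y, rt)`. -/
noncomputable def bellObj (M : EVModel K T Ω) (t : ℕ) (y rt : ℝ) (p : ℝ × (Fin K → ℝ)) : ℝ :=
  if t = T - 1 then M.stage t rt p.1 p.2 - M.γ * (y - p.1)
  else M.stage t rt p.1 p.2 + ∫ ω, M.V (t + 1) (y - p.1) (M.r (t + 1) ω) ∂M.μ

/-- `(v, d)` is an optimal solution of the Bellman equation at time `t`. -/
def IsBellmanOpt (M : EVModel K T Ω) (t : ℕ) (y rt : ℝ) (p : ℝ × (Fin K → ℝ)) : Prop :=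
  p ∈ M.feas y ∧ ∀ q ∈ M.feas y, M.bellObj t y rt q ≤ M.bellObj t y rt p

/-- Superdifferential `h_t` of the concave expected value function `V̄_t`. -/
noncomputable def h (M : EVModel K T Ω) (t : ℕ) (y : ℝ) : Set ℝ := superdiff (M.Vbar t) y

end EVModel


namespace EVModel

variable {K T : ℕ} {Ω : Type} [MeasurableSpace Ω] (M : EVModel K T Ω)

include M in
lemma T_pos : 0 < T := by
  obtain ⟨t0, ht0, _⟩ := M.pioff_attained; omega

lemma gamma_pos : 0 < M.γ := by
  obtain ⟨t0, ht0, _⟩ := M.pioff_attained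
  obtain ⟨h1, h2, h3⟩ := M.A1 t0 ht0; linarith

lemma pioff_pos : 0 < M.pioff := by
  obtain ⟨t0, ht0, he⟩ := M.pioff_attained
  obtain ⟨h1, h2, h3⟩ := M.A1 t0 ht0; rw [he]; exact h1

lemma pioff_le_gamma : M.pioff ≤ M.γ := by
  obtain ⟨t0, ht0, he⟩ := M.pioff_attained
  obtain ⟨h1, h2, h3⟩ := M.A1 t0 ht0; rw [he]; linarith

lemma feas_nonempty (y : ℝ) (hy : 0 ≤ y) : (M.feas y).Nonempty :=
  ⟨(0, fun _ => 0), ⟨⟨le_rfl, le_min M.vbar_pos.le hy⟩, fun i => ⟨le_rfl, (M.dbar_pos i).le⟩⟩⟩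

lemma feas_mono {y y' : ℝ} (h : y ≤ y') : M.feas y ⊆ M.feas y' := by
  rintro p ⟨⟨h1, h2⟩, h3⟩
  exact ⟨⟨h1, le_trans h2 (min_le_min le_rfl h)⟩, h3⟩

lemma stage_le_bound (s : ℕ) (hs : s < T) (rt v : ℝ) (d : Fin K → ℝ)
    (hv : 0 ≤ v) (hd : ∀ i, d i ∈ Icc 0 (M.dbar i)) :
    M.stage s rt v d ≤ (∑ i, M.U i (M.dbar i)) + M.pim s * max rt 0 := by
  obtain ⟨h1, h2, h3⟩ := M.A1 s hs
  have hsum : ∑ i, M.U i (d i) ≤ ∑ i, M.U i (M.dbar i) :=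
    Finset.sum_le_sum fun i _ =>
      (M.U_strictMono i).monotoneOn (hd i) ⟨(M.dbar_pos i).le, le_rfl⟩ (hd i).2
  have hdsum : 0 ≤ ∑ i, d i := Finset.sum_nonneg fun i _ => (hd i).1
  have hz : -(max rt 0) ≤ v + ∑ i, d i - rt := by
    have := le_max_left rt 0; linarith
  have hP : -(M.pim s * max rt 0) ≤ NEMPayment (M.pip s) (M.pim s) (v + ∑ i, d i - rt) := by
    rw [nem_alt]
    have h4 : M.pim s * (-(max rt 0)) ≤ M.pim s * (v + ∑ i, d i - rt) :=
      mul_le_mul_of_nonneg_left hz h1.le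
    have h5 : 0 ≤ (M.pip s - M.pim s) * max (v + ∑ i, d i - rt) 0 :=
      mul_nonneg (by linarith) (le_max_right _ _)
    nlinarith
  simp only [stage]
  linarith

lemma stage_diff_eq (s : ℕ) (rt v v' : ℝ) (d : Fin K → ℝ) :
    M.stage s rt v' d - M.stage s rt v d =
      NEMPayment (M.pip s) (M.pim s) (v + ∑ i, d i - rt) -
        NEMPayment (M.pip s) (M.pim s) (v' + ∑ i, d i - rt) := by
  simp only [stage]; ring

lemma bdd0 (y rt : ℝ) (hy : 0 ≤ y) :
    BddAbove ((fun p : ℝ × (Fin K → ℝ) =>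
      M.stage (T - 1) rt p.1 p.2 - M.γ * (y - p.1)) '' M.feas y) := by
  refine ⟨(∑ i, M.U i (M.dbar i)) + M.pim (T - 1) * max rt 0, ?_⟩
  rintro x ⟨p, hp, rfl⟩
  have hT := M.T_pos
  have hst := M.stage_le_bound (T - 1) (by omega) rt p.1 p.2 hp.1.1 hp.2
  have hv : p.1 ≤ y := le_trans hp.1.2 (min_le_right _ _)
  have hγ := M.gamma_pos
  have hge : 0 ≤ M.γ * (y - p.1) := mul_nonneg hγ.le (by linarith)
  dsimp only
  linarith

lemma W_integrable (k : ℕ)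
    (hlip : ∀ y, 0 ≤ y → ∀ r1 r2 : ℝ, |M.W k y r1 - M.W k y r2| ≤ M.γ * |r1 - r2|)
    (y : ℝ) (hy : 0 ≤ y) (s : ℕ) :
    Integrable (fun ω => M.W k y (M.r s ω)) M.μ := by
  haveI := M.prob
  have hcont : Continuous (fun rt => M.W k y rt) := by
    have hL : LipschitzWith ⟨M.γ, M.gamma_pos.le⟩ (fun rt => M.W k y rt) :=
      LipschitzWith.of_dist_le_mul fun a b => by
        rw [Real.dist_eq, Real.dist_eq]; exact hlip y hy a b
    exact hL.continuous
  refine Integrable.mono' ((integrable_const |M.W k y 0|).add ((M.r_int s).abs.const_mul M.γ))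
    ((hcont.measurable.comp (M.r_meas s)).aestronglyMeasurable) ?_
  filter_upwards with ω
  have h := hlip y hy (M.r s ω) 0
  simp only [sub_zero] at h
  have habs : |M.W k y (M.r s ω)| ≤ |M.W k y 0| + |M.W k y (M.r s ω) - M.W k y 0| := by
    have := abs_add_le (M.W k y 0) (M.W k y (M.r s ω) - M.W k y 0)
    simpa using this
  simp only [Real.norm_eq_abs]
  calc |M.W k y (M.r s ω)| ≤ |M.W k y 0| + |M.W k y (M.r s ω) - M.W k y 0| := habs
    _ ≤ |M.W k y 0| + M.γ * |M.r s ω| := by linarith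
    _ = |M.W k y 0| + M.γ * |M.r s ω| := rfl

lemma integral_W_diff (k : ℕ) (s : ℕ)
    (hint : ∀ z, 0 ≤ z → Integrable (fun ω => M.W k z (M.r s ω)) M.μ)
    (hsand : ∀ y, 0 ≤ y → ∀ ε, 0 < ε → ∀ rt : ℝ,
      -M.γ * ε ≤ M.W k (y + ε) rt - M.W k y rt ∧
        M.W k (y + ε) rt - M.W k y rt ≤ -M.pioff * ε)
    (a b : ℝ) (ha : 0 ≤ a) (hab : a ≤ b) :
    M.pioff * (b - a) ≤ (∫ ω, M.W k a (M.r s ω) ∂M.μ) - (∫ ω, M.W k b (M.r s ω) ∂M.μ) ∧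
      (∫ ω, M.W k a (M.r s ω) ∂M.μ) - (∫ ω, M.W k b (M.r s ω) ∂M.μ) ≤ M.γ * (b - a) := by
  haveI := M.prob
  rcases eq_or_lt_of_le hab with rfl | hlt
  · simp
  · have hε : 0 < b - a := by linarith
    have hpt := fun rt => hsand a ha (b - a) hε rt
    have hab' : a + (b - a) = b := by ring
    rw [hab'] at hpt
    have hb0 : (0:ℝ) ≤ b := by linarith
    have hup : (∫ ω, (M.W k b (M.r s ω) - M.W k a (M.r s ω)) ∂M.μ) ≤ -M.pioff * (b - a) := by
      calc (∫ ω, (M.W k b (M.r s ω) - M.W k a (M.r s ω)) ∂M.μ)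
          ≤ ∫ _ω, -M.pioff * (b - a) ∂M.μ :=
            integral_mono ((hint b hb0).sub (hint a ha)) (integrable_const _)
              fun ω => (hpt _).2
        _ = -M.pioff * (b - a) := by simp
    have hlo : -M.γ * (b - a) ≤ ∫ ω, (M.W k b (M.r s ω) - M.W k a (M.r s ω)) ∂M.μ := by
      calc -M.γ * (b - a) = ∫ _ω, -M.γ * (b - a) ∂M.μ := by simp
        _ ≤ _ := integral_mono (integrable_const _) ((hint b hb0).sub (hint a ha))
              fun ω => (hpt _).1
    have hsub : (∫ ω, (M.W k b (M.r s ω) - M.W k a (M.r s ω)) ∂M.μ)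
        = (∫ ω, M.W k b (M.r s ω) ∂M.μ) - ∫ ω, M.W k a (M.r s ω) ∂M.μ :=
      integral_sub (hint b hb0) (hint a ha)
    rw [hsub] at hup hlo
    constructor <;> linarith

lemma bddSucc (k : ℕ) (y rt : ℝ) (hy : 0 ≤ y)
    (hmono : ∀ z, 0 ≤ z → (∫ ω, M.W k z (M.r (T - 1 - k) ω) ∂M.μ) ≤
      ∫ ω, M.W k 0 (M.r (T - 1 - k) ω) ∂M.μ) :
    BddAbove ((fun p : ℝ × (Fin K → ℝ) => M.stage (T - 2 - k) rt p.1 p.2 +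
      ∫ ω, M.W k (y - p.1) (M.r (T - 1 - k) ω) ∂M.μ) '' M.feas y) := by
  refine ⟨(∑ i, M.U i (M.dbar i)) + M.pim (T - 2 - k) * max rt 0 +
    ∫ ω, M.W k 0 (M.r (T - 1 - k) ω) ∂M.μ, ?_⟩
  rintro x ⟨p, hp, rfl⟩
  have hT := M.T_pos
  have hst := M.stage_le_bound (T - 2 - k) (by omega) rt p.1 p.2 hp.1.1 hp.2
  have hv : p.1 ≤ y := le_trans hp.1.2 (min_le_right _ _)
  have hm := hmono (y - p.1) (by linarith)
  dsimp only
  linarith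


lemma W_main (k : ℕ) :
    (∀ y : ℝ, 0 ≤ y → ∀ r1 r2 : ℝ, |M.W k y r1 - M.W k y r2| ≤ M.γ * |r1 - r2|) ∧
      ∀ y : ℝ, 0 ≤ y → ∀ ε : ℝ, 0 < ε → ∀ rt : ℝ,
        -M.γ * ε ≤ M.W k (y + ε) rt - M.W k y rt ∧
          M.W k (y + ε) rt - M.W k y rt ≤ -M.pioff * ε := by
  induction k with
  | zero =>
    have hT := M.T_pos
    obtain ⟨hpm, hpmpp, hppγ⟩ := M.A1 (T - 1) (by omega)
    constructor
    · intro y hy r1 r2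
      have key : ∀ ra rb : ℝ, M.W 0 y ra ≤ M.W 0 y rb + M.γ * |ra - rb| := by
        intro ra rb
        simp only [W]
        apply csSup_le ((M.feas_nonempty y hy).image _)
        rintro x ⟨p, hp, rfl⟩
        have hle := le_csSup (M.bdd0 y rb hy) (mem_image_of_mem
          (fun p : ℝ × (Fin K → ℝ) => M.stage (T - 1) rb p.1 p.2 - M.γ * (y - p.1)) hp)
        have hnem := nem_lip (pp := M.pip (T - 1)) (pm := M.pim (T - 1)) hpm.le hpmpp
          (a := p.1 + ∑ i, p.2 i - rb) (b := p.1 + ∑ i, p.2 i - ra)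
        have heq : (p.1 + ∑ i, p.2 i - ra) - (p.1 + ∑ i, p.2 i - rb) = rb - ra := by ring
        rw [heq, abs_sub_comm rb ra] at hnem
        have hmul : M.pip (T - 1) * |ra - rb| ≤ M.γ * |ra - rb| :=
          mul_le_mul_of_nonneg_right hppγ.le (abs_nonneg _)
        have hsd2 : M.stage (T - 1) ra p.1 p.2 - M.stage (T - 1) rb p.1 p.2 =
            NEMPayment (M.pip (T - 1)) (M.pim (T - 1)) (p.1 + ∑ i, p.2 i - rb)
              - NEMPayment (M.pip (T - 1)) (M.pim (T - 1)) (p.1 + ∑ i, p.2 i - ra) := by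
          simp only [stage]; ring
        have habs := abs_le.mp hnem
        dsimp only at hle ⊢
        linarith [habs.1, habs.2]
      rw [abs_sub_le_iff]
      have k1 := key r1 r2
      have k2 := key r2 r1
      rw [abs_sub_comm r2 r1] at k2
      exact ⟨by linarith, by linarith⟩
    · intro y hy ε hε rt
      have hyε : (0:ℝ) ≤ y + ε := by linarith
      constructor
      · have key : sSup ((fun p : ℝ × (Fin K → ℝ) =>
            M.stage (T - 1) rt p.1 p.2 - M.γ * (y - p.1)) '' M.feas y) + (-(M.γ * ε)) ≤
            sSup ((fun p : ℝ × (Fin K → ℝ) =>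
            M.stage (T - 1) rt p.1 p.2 - M.γ * (y + ε - p.1)) '' M.feas (y + ε)) := by
          apply sSup_trans_le ((M.feas_nonempty y hy).image _) (M.bdd0 (y + ε) rt hyε)
          rintro x ⟨p, hp, rfl⟩
          refine ⟨_, mem_image_of_mem _ (M.feas_mono (by linarith) hp), ?_⟩
          dsimp only
          have hr : M.γ * (y + ε - p.1) = M.γ * (y - p.1) + M.γ * ε := by ring
          linarith
        simp only [W]
        linarith
      · have key : sSup ((fun p : ℝ × (Fin K → ℝ) =>
            M.stage (T - 1) rt p.1 p.2 - M.γ * (y + ε - p.1)) '' M.feas (y + ε)) + M.pioff * ε ≤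
            sSup ((fun p : ℝ × (Fin K → ℝ) =>
            M.stage (T - 1) rt p.1 p.2 - M.γ * (y - p.1)) '' M.feas y) := by
          apply sSup_trans_le ((M.feas_nonempty (y + ε) hyε).image _) (M.bdd0 y rt hy)
          rintro x ⟨p, hp, rfl⟩
          obtain ⟨⟨hv0, hvle⟩, hd⟩ := hp
          have hvy : p.1 ≤ y + ε := le_trans hvle (min_le_right _ _)
          have hvvb : p.1 ≤ M.vbar := le_trans hvle (min_le_left _ _)
          set v' := min p.1 y with hv'
          have hδ0 : v' ≤ p.1 := min_le_left _ _
          have hv'0 : 0 ≤ v' := le_min hv0 hy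
          have hv'y : v' ≤ y := min_le_right _ _
          have hδε : p.1 - v' ≤ ε := by
            rcases le_total p.1 y with h | h
            · rw [hv', min_eq_left h]; linarith
            · rw [hv', min_eq_right h]; linarith
          have hpmem : (v', p.2) ∈ M.feas y := ⟨⟨hv'0, le_min (le_trans hδ0 hvvb) hv'y⟩, hd⟩
          refine ⟨_, mem_image_of_mem _ hpmem, ?_⟩
          dsimp only
          have hnem := (nem_bounds (pp := M.pip (T - 1)) (pm := M.pim (T - 1)) hpm.le hpmpp
            (a := v' + ∑ i, p.2 i - rt) (b := p.1 + ∑ i, p.2 i - rt) (by linarith)).1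
          have he1 : (p.1 + ∑ i, p.2 i - rt) - (v' + ∑ i, p.2 i - rt) = p.1 - v' := by ring
          rw [he1] at hnem
          have hsd := M.stage_diff_eq (T - 1) rt p.1 v' p.2
          have h1 : M.pioff * (p.1 - v') ≤ M.pim (T - 1) * (p.1 - v') :=
            mul_le_mul_of_nonneg_right (M.pioff_le (T - 1) (by omega)) (by linarith)
          have h2 : M.pioff * (ε - (p.1 - v')) ≤ M.γ * (ε - (p.1 - v')) :=
            mul_le_mul_of_nonneg_right M.pioff_le_gamma (by linarith)
          have hr1 : M.pioff * ε = M.pioff * (p.1 - v') + M.pioff * (ε - (p.1 - v')) := by ring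
          have hr2 : M.γ * (y + ε - p.1) = M.γ * (y - v') + M.γ * (ε - (p.1 - v')) := by ring
          linarith
        simp only [W]
        linarith
  | succ k ih =>
    obtain ⟨ihlip, ihsand⟩ := ih
    have hT := M.T_pos
    obtain ⟨hpm, hpmpp, hppγ⟩ := M.A1 (T - 2 - k) (by omega)
    have hint : ∀ z, 0 ≤ z → Integrable (fun ω => M.W k z (M.r (T - 1 - k) ω)) M.μ :=
      fun z hz => M.W_integrable k ihlip z hz _
    have hI := fun a b ha hab => M.integral_W_diff k (T - 1 - k) hint ihsand a b ha hab
    have hmono : ∀ z, 0 ≤ z → (∫ ω, M.W k z (M.r (T - 1 - k) ω) ∂M.μ) ≤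
        ∫ ω, M.W k 0 (M.r (T - 1 - k) ω) ∂M.μ := by
      intro z hz
      have h := (hI 0 z le_rfl hz).1
      have h0 : 0 ≤ M.pioff * (z - 0) := mul_nonneg M.pioff_pos.le (by linarith)
      linarith
    have hbdd : ∀ y rt : ℝ, 0 ≤ y →
        BddAbove ((fun p : ℝ × (Fin K → ℝ) => M.stage (T - 2 - k) rt p.1 p.2 +
          ∫ ω, M.W k (y - p.1) (M.r (T - 1 - k) ω) ∂M.μ) '' M.feas y) :=
      fun y rt hy => M.bddSucc k y rt hy hmono
    constructor
    · intro y hy r1 r2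
      have key : ∀ ra rb : ℝ, M.W (k + 1) y ra ≤ M.W (k + 1) y rb + M.γ * |ra - rb| := by
        intro ra rb
        simp only [W]
        apply csSup_le ((M.feas_nonempty y hy).image _)
        rintro x ⟨p, hp, rfl⟩
        have hle := le_csSup (hbdd y rb hy) (mem_image_of_mem
          (fun p : ℝ × (Fin K → ℝ) => M.stage (T - 2 - k) rb p.1 p.2 +
            ∫ ω, M.W k (y - p.1) (M.r (T - 1 - k) ω) ∂M.μ) hp)
        have hnem := nem_lip (pp := M.pip (T - 2 - k)) (pm := M.pim (T - 2 - k)) hpm.le hpmpp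
          (a := p.1 + ∑ i, p.2 i - rb) (b := p.1 + ∑ i, p.2 i - ra)
        have heq : (p.1 + ∑ i, p.2 i - ra) - (p.1 + ∑ i, p.2 i - rb) = rb - ra := by ring
        rw [heq, abs_sub_comm rb ra] at hnem
        have hmul : M.pip (T - 2 - k) * |ra - rb| ≤ M.γ * |ra - rb| :=
          mul_le_mul_of_nonneg_right hppγ.le (abs_nonneg _)
        have hsd2 : M.stage (T - 2 - k) ra p.1 p.2 - M.stage (T - 2 - k) rb p.1 p.2 =
            NEMPayment (M.pip (T - 2 - k)) (M.pim (T - 2 - k)) (p.1 + ∑ i, p.2 i - rb)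
              - NEMPayment (M.pip (T - 2 - k)) (M.pim (T - 2 - k)) (p.1 + ∑ i, p.2 i - ra) := by
          simp only [stage]; ring
        have habs := abs_le.mp hnem
        dsimp only at hle ⊢
        linarith [habs.1, habs.2]
      rw [abs_sub_le_iff]
      have k1 := key r1 r2
      have k2 := key r2 r1
      rw [abs_sub_comm r2 r1] at k2
      exact ⟨by linarith, by linarith⟩
    · intro y hy ε hε rt
      have hyε : (0:ℝ) ≤ y + ε := by linarith
      constructor
      · have key : sSup ((fun p : ℝ × (Fin K → ℝ) => M.stage (T - 2 - k) rt p.1 p.2 +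
            ∫ ω, M.W k (y - p.1) (M.r (T - 1 - k) ω) ∂M.μ) '' M.feas y) + (-(M.γ * ε)) ≤
            sSup ((fun p : ℝ × (Fin K → ℝ) => M.stage (T - 2 - k) rt p.1 p.2 +
            ∫ ω, M.W k (y + ε - p.1) (M.r (T - 1 - k) ω) ∂M.μ) '' M.feas (y + ε)) := by
          apply sSup_trans_le ((M.feas_nonempty y hy).image _) (hbdd (y + ε) rt hyε)
          rintro x ⟨p, hp, rfl⟩
          refine ⟨_, mem_image_of_mem _ (M.feas_mono (by linarith) hp), ?_⟩
          dsimp only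
          have hvy : p.1 ≤ y := le_trans hp.1.2 (min_le_right _ _)
          have h := (hI (y - p.1) (y + ε - p.1) (by linarith) (by linarith)).2
          have he : M.γ * ((y + ε - p.1) - (y - p.1)) = M.γ * ε := by ring
          rw [he] at h
          linarith
        simp only [W]
        linarith
      · have key : sSup ((fun p : ℝ × (Fin K → ℝ) => M.stage (T - 2 - k) rt p.1 p.2 +
            ∫ ω, M.W k (y + ε - p.1) (M.r (T - 1 - k) ω) ∂M.μ) '' M.feas (y + ε)) +
              M.pioff * ε ≤
            sSup ((fun p : ℝ × (Fin K → ℝ) => M.stage (T - 2 - k) rt p.1 p.2 +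
            ∫ ω, M.W k (y - p.1) (M.r (T - 1 - k) ω) ∂M.μ) '' M.feas y) := by
          apply sSup_trans_le ((M.feas_nonempty (y + ε) hyε).image _) (hbdd y rt hy)
          rintro x ⟨p, hp, rfl⟩
          obtain ⟨⟨hv0, hvle⟩, hd⟩ := hp
          have hvy : p.1 ≤ y + ε := le_trans hvle (min_le_right _ _)
          have hvvb : p.1 ≤ M.vbar := le_trans hvle (min_le_left _ _)
          set v' := min p.1 y with hv'
          have hδ0 : v' ≤ p.1 := min_le_left _ _
          have hv'0 : 0 ≤ v' := le_min hv0 hy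
          have hv'y : v' ≤ y := min_le_right _ _
          have hδε : p.1 - v' ≤ ε := by
            rcases le_total p.1 y with h | h
            · rw [hv', min_eq_left h]; linarith
            · rw [hv', min_eq_right h]; linarith
          have hpmem : (v', p.2) ∈ M.feas y := ⟨⟨hv'0, le_min (le_trans hδ0 hvvb) hv'y⟩, hd⟩
          refine ⟨_, mem_image_of_mem _ hpmem, ?_⟩
          dsimp only
          have hnem := (nem_bounds (pp := M.pip (T - 2 - k)) (pm := M.pim (T - 2 - k))
            hpm.le hpmpp (a := v' + ∑ i, p.2 i - rt) (b := p.1 + ∑ i, p.2 i - rt)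
            (by linarith)).1
          have he1 : (p.1 + ∑ i, p.2 i - rt) - (v' + ∑ i, p.2 i - rt) = p.1 - v' := by ring
          rw [he1] at hnem
          have hsd := M.stage_diff_eq (T - 2 - k) rt p.1 v' p.2
          have h1 : M.pioff * (p.1 - v') ≤ M.pim (T - 2 - k) * (p.1 - v') :=
            mul_le_mul_of_nonneg_right (M.pioff_le (T - 2 - k) (by omega)) (by linarith)
          have hInt := (hI (y - v') (y + ε - p.1) (by linarith) (by linarith)).1
          have he2 : M.pioff * ((y + ε - p.1) - (y - v')) = M.pioff * (ε - (p.1 - v')) := by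
            ring
          rw [he2] at hInt
          have hr1 : M.pioff * ε = M.pioff * (p.1 - v') + M.pioff * (ε - (p.1 - v')) := by ring
          linarith
        simp only [W]
        linarith

end EVModel

/-- **Proposition 2 (sandwich bound).**
For every `t ∈ {0, …, T-1}`, state `(y, r, π_t)` with `y ≥ 0` and every `ε > 0`,
`-γ ε ≤ V_t(y + ε, r, π_t) - V_t(y, r, π_t) ≤ -π_off⁻ ε`.  In particular `V_t` is
strictly decreasing in the remaining EV charging demand `y`. -/
theorem prop2_sandwich (K T : ℕ) (Ω : Type) [MeasurableSpace Ω]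
    (M : EVModel K T Ω) (t : ℕ) (ht : t < T) (rt : ℝ) (hrt : 0 ≤ rt) :
    (∀ y : ℝ, 0 ≤ y → ∀ ε : ℝ, 0 < ε →
      -M.γ * ε ≤ M.V t (y + ε) rt - M.V t y rt ∧
        M.V t (y + ε) rt - M.V t y rt ≤ -M.pioff * ε) ∧
      StrictAntiOn (fun y => M.V t y rt) (Set.Ici 0) := by
  have main := M.W_main (T - 1 - t)
  constructor
  · intro y hy ε hε
    exact main.2 y hy ε hε rt
  · intro y1 h1 y2 h2 h12
    have h1' : (0:ℝ) ≤ y1 := h1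
    have hs := (main.2 y1 h1' (y2 - y1) (by linarith) rt).2
    have he : y1 + (y2 - y1) = y2 := by ring
    rw [he] at hs
    have hpos : 0 < M.pioff * (y2 - y1) := mul_pos M.pioff_pos (by linarith)
    show M.V t y2 rt < M.V t y1 rt
    show M.W (T - 1 - t) y2 rt < M.W (T - 1 - t) y1 rt
    linarith
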